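/- arXiv:0812.0405 — 3 statements merged into one kernel-verified Lean document; each statement's English description precedes it below -/
import Mathlib

section
/- Let ρ_AB be a separable bipartite state on ℂ^{d_A} ⊗ ℂ^{d_B} such that rank ρ_AB = d and rank ρ_A = d. Then ρ_AB can be written as a convex combination of at most d pure product states: there exist λ₁,…,λ_d ≥ 0 with Σ_{i=1}^d λ_i = 1 and unit vectors a_i ∈ ℂ^{d_A}, b_i ∈ ℂ^{d_B} (i = 1,…,d) such that ρ_AB = Σ_{i=1}^d λ_i |a_i⟩⟨a_i| ⊗ |b_i⟩⟨b_i|. -/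
open Matrix Kronecker
open scoped ComplexOrder

noncomputable section

/-- `|v⟩⟨v|`, the rank-one matrix `v v*`. -/
def ketBra {d : ℕ} (v : Fin d → ℂ) : Matrix (Fin d) (Fin d) ℂ :=
  vecMulVec v (star v)

/-- Partial trace over the `B` factor: `(Tr_B γ)_{jk} = Σ_m γ_{(j,m),(k,m)}`. -/
def trB {dA dB : ℕ} (γ : Matrix (Fin dA × Fin dB) (Fin dA × Fin dB) ℂ) :
    Matrix (Fin dA) (Fin dA) ℂ :=
  Matrix.of fun j k => ∑ m : Fin dB, γ (j, m) (k, m)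

/-- Partial trace over the `A` factor: `(Tr_A γ)_{mn} = Σ_j γ_{(j,m),(j,n)}`. -/
def trA {dA dB : ℕ} (γ : Matrix (Fin dA × Fin dB) (Fin dA × Fin dB) ℂ) :
    Matrix (Fin dB) (Fin dB) ℂ :=
  Matrix.of fun m n => ∑ j : Fin dA, γ (j, m) (j, n)

/-- A positive semidefinite matrix indexed by `(Fin dA) × (Fin dB)` is separable if it is
a finite positive combination of Kronecker products `|a⟩⟨a| ⊗ |b⟩⟨b|`. -/
def MatrixSeparable {dA dB : ℕ} (γ : Matrix (Fin dA × Fin dB) (Fin dA × Fin dB) ℂ) : Prop :=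
  ∃ (n : ℕ) (lam : Fin n → ℝ) (a : Fin n → Fin dA → ℂ) (b : Fin n → Fin dB → ℂ),
    (∀ i, 0 ≤ lam i) ∧
      γ = ∑ i, (lam i : ℂ) • (ketBra (a i) ⊗ₖ ketBra (b i))


open Submodule Module

/-- generic rank-one matrix `v v*` -/
def kB {η : Type*} (v : η → ℂ) : Matrix η η ℂ := vecMulVec v (star v)

lemma ketBra_eq_kB {d : ℕ} (v : Fin d → ℂ) : ketBra v = kB v := rfl

/-- product vector -/
def pv {dA dB : ℕ} (a : Fin dA → ℂ) (b : Fin dB → ℂ) : Fin dA × Fin dB → ℂ :=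
  fun p => a p.1 * b p.2




/-- generic version of ketBra -/
lemma kB_kron {dA dB : ℕ} (a : Fin dA → ℂ) (b : Fin dB → ℂ) :
    kB a ⊗ₖ kB b = kB (pv a b) := by
  ext ⟨j,m⟩ ⟨k,n⟩
  simp [kB, pv, vecMulVec_apply, kroneckerMap_apply, mul_mul_mul_comm]

lemma kB_smul {η : Type*} (c : ℂ) (v : η → ℂ) :
    kB (c • v) = (c * star c) • kB v := by
  ext j k
  simp [kB, vecMulVec_apply]
  ring

lemma mulVec_kB {η : Type*} [Fintype η] (v x : η → ℂ) :
    (kB v).mulVec x = (star v ⬝ᵥ x) • v := by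
  ext j
  simp [kB, vecMulVec_apply, Matrix.mulVec, dotProduct, Finset.mul_sum, mul_comm, mul_left_comm]

lemma kB_posSemidef {η : Type*} [Fintype η] (v : η → ℂ) : (kB v).PosSemidef := by
  rw [Matrix.posSemidef_iff_dotProduct_mulVec]
  constructor
  · ext j k; simp [kB, vecMulVec_apply, Matrix.conjTranspose_apply, mul_comm]
  · intro x
    rw [mulVec_kB, dotProduct_smul]
    have h : star x ⬝ᵥ v = star (star v ⬝ᵥ x) := by
      simp [dotProduct, mul_comm]
    rw [h, smul_eq_mul]
    exact mul_star_self_nonneg ((star v ⬝ᵥ x : ℂ))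

lemma kB_trace {η : Type*} [Fintype η] (v : η → ℂ) : (kB v).trace = star v ⬝ᵥ v := by
  simp [kB, Matrix.trace, Matrix.diag, vecMulVec_apply, dotProduct, mul_comm]
lemma span_range_smul {ι η : Type*} (c : ι → ℂ) (hc : ∀ i, c i ≠ 0) (v : ι → η → ℂ) :
    span ℂ (Set.range fun i => c i • v i) = span ℂ (Set.range v) := by
  apply le_antisymm
  · rw [span_le]; rintro _ ⟨i, rfl⟩
    exact smul_mem _ _ (subset_span ⟨i, rfl⟩)
  · rw [span_le]; rintro _ ⟨i, rfl⟩
    have : v i = (c i)⁻¹ • (c i • v i) := by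
      rw [smul_smul, inv_mul_cancel₀ (hc i), one_smul]
    rw [this]
    exact smul_mem _ _ (subset_span ⟨i, rfl⟩)

lemma rank_sum_kB {η ι : Type*} [Fintype η] [DecidableEq η] [Fintype ι]
    (v : ι → η → ℂ) (lam : ι → ℝ) (h : ∀ i, 0 < lam i) :
    (∑ i, (lam i : ℂ) • kB (v i)).rank = Module.finrank ℂ (span ℂ (Set.range v)) := by
  classical
  set W : Matrix ι η ℂ := Matrix.of fun i j => (Real.sqrt (lam i) : ℂ) * star (v i j) with hW
  have key : (∑ i, (lam i : ℂ) • kB (v i)) = Wᴴ * W := by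
    ext j k
    simp only [Matrix.sum_apply, Matrix.smul_apply, Matrix.mul_apply, Matrix.conjTranspose_apply,
      hW, Matrix.of_apply, kB, vecMulVec_apply, smul_eq_mul, star_mul', star_star,
      Pi.star_apply, Complex.star_def, Complex.conj_ofReal]
    apply Finset.sum_congr rfl
    intro i _
    have : (Real.sqrt (lam i) : ℂ) * (Real.sqrt (lam i) : ℂ) = (lam i : ℂ) := by
      rw [← Complex.ofReal_mul, Real.mul_self_sqrt (h i).le]
    simp only [Complex.conj_conj]
    ring_nf
    rw [sq, this]
    ring
  rw [key, Matrix.rank_conjTranspose_mul_self, ← Matrix.rank_conjTranspose,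
    Matrix.rank_eq_finrank_span_cols]
  have hcols : (Wᴴ)ᵀ = fun i => ((Real.sqrt (lam i) : ℂ)) • v i := by
    ext i j
    simp [hW, Matrix.conjTranspose_apply, Complex.star_def, Complex.conj_ofReal, mul_comm]
  rw [show Wᴴ.col = (Wᴴ)ᵀ from rfl, hcols, span_range_smul _ (fun i => by
    simpa using (Real.sqrt_pos.2 (h i)).ne')]
lemma spectral {d : ℕ} (σ : Matrix (Fin d) (Fin d) ℂ) (h : σ.PosSemidef) :
    ∃ (μ : Fin d → ℝ) (u : Fin d → Fin d → ℂ),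
      (∀ m, 0 ≤ μ m) ∧ (∀ m, star (u m) ⬝ᵥ u m = 1) ∧
      σ = ∑ m, (μ m : ℂ) • kB (u m) ∧
      Fintype.card {m // μ m ≠ 0} = σ.rank := by
  classical
  have hA := h.1
  set U : Matrix (Fin d) (Fin d) ℂ := (Matrix.IsHermitian.eigenvectorUnitary hA : Matrix (Fin d) (Fin d) ℂ) with hU
  have hUU : star U * U = 1 := Matrix.mem_unitaryGroup_iff'.mp (Matrix.IsHermitian.eigenvectorUnitary hA).2
  refine ⟨hA.eigenvalues, fun m j => U j m, fun m => h.eigenvalues_nonneg m, ?_, ?_, (hA.rank_eq_card_non_zero_eigs).symm⟩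
  · intro m
    have := congrArg (fun M => M m m) hUU
    simpa [Matrix.mul_apply, dotProduct, Matrix.one_apply] using this
  · have hspec := hA.spectral_theorem
    rw [Unitary.conjStarAlgAut_apply] at hspec
    rw [← hU] at hspec
    nth_rewrite 1 [hspec]
    ext j k
    rw [Matrix.mul_assoc]
    simp only [Matrix.mul_apply, Matrix.diagonal_apply, Matrix.sum_apply, Matrix.smul_apply,
      kB, vecMulVec_apply, Pi.star_apply, Matrix.conjTranspose_apply]
    apply Finset.sum_congr rfl
    intro m _
    rw [Finset.sum_eq_single m]
    · simp only [if_pos rfl, Function.comp_apply, smul_eq_mul, Matrix.star_apply, if_true]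
      exact mul_left_comm (U j m) ((hA.eigenvalues m : ℂ)) (star (U k m))
    · intro c _ hc; simp [if_neg (Ne.symm hc)]
    · simp


/-- product vector -/
lemma indep_iff {M : Type*} [AddCommGroup M] [Module ℂ M] (K : Finset (Fin n)) (f : Fin n → M) :
    LinearIndependent ℂ (fun k : ↥K => f k) ↔
      ∀ c : Fin n → ℂ, ∑ k ∈ K, c k • f k = 0 → ∀ k ∈ K, c k = 0 := by
  classical
  rw [Fintype.linearIndependent_iff]
  constructor
  · intro H c hc k hk
    exact H (fun k : ↥K => c k)
      (by rw [Finset.sum_coe_sort K (fun k => c k • f k)]; exact hc) ⟨k, hk⟩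
  · intro H g hg k
    have := H (fun i => if h : i ∈ K then g ⟨i, h⟩ else 0) ?_ k k.2
    · simpa [k.2] using this
    · rw [← Finset.sum_coe_sort K (fun i => (if h : i ∈ K then g ⟨i, h⟩ else 0) • f i)]
      rw [← hg]
      apply Finset.sum_congr rfl
      intro i _
      rw [dif_pos i.2]

lemma exists_coeff {M : Type*} [AddCommGroup M] [Module ℂ M] (K : Finset (Fin n)) (f : Fin n → M)
    (x : M) (hx : x ∈ span ℂ (f '' ↑K)) : ∃ c : Fin n → ℂ, x = ∑ k ∈ K, c k • f k := by
  classical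
  rw [Set.image_eq_range] at hx
  obtain ⟨c, hc⟩ := (mem_span_range_iff_exists_fun ℂ).mp hx
  refine ⟨fun i => if h : i ∈ K then c ⟨i, h⟩ else 0, ?_⟩
  rw [← hc, ← Finset.sum_coe_sort K (fun i => (if h : i ∈ K then c ⟨i, h⟩ else 0) • f i)]
  apply Finset.sum_congr rfl
  intro i _
  rw [dif_pos (Finset.mem_coe.mp i.2)]

lemma range_coe_image {α M : Type*} (K : Finset α) (f : α → M) :
    Set.range (fun k : ↥K => f k) = f '' ↑K := by
  ext x
  constructor
  · rintro ⟨k, rfl⟩; exact ⟨k, k.2, rfl⟩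
  · rintro ⟨i, hi, rfl⟩; exact ⟨⟨i, hi⟩, rfl⟩

lemma structure_lemma (T : Finset (Fin n)) (a : Fin n → Fin dA → ℂ) (b : Fin n → Fin dB → ℂ)
    (ha : ∀ i ∈ T, a i ≠ 0) (hb : ∀ i ∈ T, b i ≠ 0)
    (hdim : finrank ℂ (span ℂ ((fun i => pv (a i) (b i)) '' ↑T)) =
      finrank ℂ (span ℂ (a '' ↑T))) :
    ∃ (K : Finset (Fin n)) (π : Fin n → Fin n),
      K ⊆ T ∧ K.card = finrank ℂ (span ℂ (a '' ↑T)) ∧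
      (∀ j ∈ T, π j ∈ K) ∧
      (∀ j ∈ T, ∃ t : ℂ, t ≠ 0 ∧ b j = t • b (π j)) ∧
      (∀ j ∈ T, ∀ (D : Finset (Fin n)), (∀ m, m ∈ K ∧ π m = π j → m ∈ D) →
        a j ∈ span ℂ (a '' ↑D)) := by
  classical
  set v : Fin n → Fin dA × Fin dB → ℂ := fun i => pv (a i) (b i) with hv
  -- Step A : a basis K ⊆ T for the span of the a's
  obtain ⟨s, hsT, hsspan, hsli⟩ := exists_linearIndependent ℂ (a '' ↑T)
  have hfin : s.Finite := (T.finite_toSet.image a).subset hsT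
  haveI : Fintype s := hfin.fintype
  have hpick : ∀ w : s, ∃ i, i ∈ T ∧ a i = w := by
    rintro ⟨w, hw⟩
    obtain ⟨i, hi, rfl⟩ := hsT hw
    exact ⟨i, hi, rfl⟩
  choose g hgT hga using hpick
  set K : Finset (Fin n) := Finset.image g Finset.univ with hK
  have hKT : K ⊆ T := by
    intro k hk
    obtain ⟨w, _, rfl⟩ := Finset.mem_image.mp hk
    exact hgT w
  have haK : a '' ↑K = s := by
    apply Set.Subset.antisymm
    · rintro _ ⟨k, hk, rfl⟩
      obtain ⟨w, _, rfl⟩ := Finset.mem_image.mp hk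
      rw [hga w]; exact w.2
    · intro w hw
      exact ⟨g ⟨w, hw⟩, Finset.mem_image_of_mem g (Finset.mem_univ _), hga ⟨w, hw⟩⟩
  have hginj : Function.Injective g := by
    intro w w' hww
    have := hga w
    rw [hww, hga w'] at this
    exact Subtype.ext this.symm
  have haKinj : Set.InjOn a ↑K := by
    rintro k hk k' hk' hkk
    obtain ⟨w, _, rfl⟩ := Finset.mem_image.mp hk
    obtain ⟨w', _, rfl⟩ := Finset.mem_image.mp hk'
    rw [hga w, hga w'] at hkk
    exact congrArg g (Subtype.ext hkk)
  have hcardK : K.card = Fintype.card s := by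
    rw [hK, Finset.card_image_of_injective _ hginj, Finset.card_univ]
  -- dimension of span of the a's
  have hcard : K.card = finrank ℂ (span ℂ (a '' ↑T)) := by
    rw [← hsspan, finrank_span_set_eq_card hsli, Set.toFinset_card, hcardK]
  -- coefficient extraction for the a's
  have hindA : ∀ c : Fin n → ℂ, ∑ k ∈ K, c k • a k = 0 → ∀ k ∈ K, c k = 0 := by
    rw [← indep_iff]
    have : (fun k : ↥K => a k) = Subtype.val ∘ (fun k : ↥K => (⟨a k, haK ▸ ⟨k, k.2, rfl⟩⟩ : s)) := by
      funext k; rfl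
    rw [this]
    apply hsli.comp
    intro k k' hkk
    have : a k = a k' := congrArg Subtype.val hkk
    exact Subtype.ext (haKinj (Finset.mem_coe.mpr k.2) (Finset.mem_coe.mpr k'.2) this)
  -- slicing: from a vector identity on products, get identities on the a's
  have hslice : ∀ (c : Fin n → ℂ) (x : Fin dA → ℂ) (y : Fin dB → ℂ) (m : Fin dB),
      (∑ k ∈ K, c k • v k = pv x y) →
      ∑ k ∈ K, (c k * b k m) • a k = y m • x := by
    intro c x y m hsum
    funext j
    have := congrFun hsum (j, m)
    simp only [Finset.sum_apply, Pi.smul_apply, smul_eq_mul, hv, pv] at this ⊢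
    rw [mul_comm (y m) (x j), ← this]
    apply Finset.sum_congr rfl
    intro k _
    ring
  -- Step B : the product vectors indexed by K are linearly independent
  have hindV : ∀ c : Fin n → ℂ, ∑ k ∈ K, c k • v k = 0 → ∀ k ∈ K, c k = 0 := by
    intro c hc k hk
    have hbm : ∀ m, c k * b k m = 0 := by
      intro m
      have h0 : (0 : Fin dA × Fin dB → ℂ) = pv (0 : Fin dA → ℂ) (0 : Fin dB → ℂ) := by
        funext p; simp [pv]
      have := hslice c 0 0 m (by rw [hc, h0])
      have := congrFun this
      have h2 : ∑ k ∈ K, (c k * b k m) • a k = 0 := by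
        funext j
        have := congrFun (hslice c 0 0 m (by rw [hc, h0])) j
        simpa using this
      exact hindA _ h2 k hk
    by_contra hck
    apply hb k (hKT hk)
    funext m
    have := hbm m
    rcases mul_eq_zero.mp this with h | h
    · exact absurd h hck
    · exact h
  have hVli : LinearIndependent ℂ (fun k : ↥K => v k) := (indep_iff K v).mpr hindV
  -- Step B' : span of v over K = span of v over T
  have hvKT : span ℂ (v '' ↑K) = span ℂ (v '' ↑T) := by
    apply Submodule.eq_of_le_of_finrank_le
    · exact span_mono (Set.image_mono hKT)
    · rw [hdim, ← hcard, ← range_coe_image K v, finrank_span_eq_card hVli]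
      simp
  -- Step C : coefficients for each j ∈ T
  have hstep : ∀ j ∈ T, ∃ c : Fin n → ℂ, a j = ∑ k ∈ K, c k • a k ∧
      (∀ k ∈ K, c k ≠ 0 → ∃ t : ℂ, t ≠ 0 ∧ b j = t • b k) ∧ (∃ k ∈ K, c k ≠ 0) := by
    intro j hj
    obtain ⟨c, hc⟩ := exists_coeff K a (a j) (by
      rw [haK, hsspan]; exact subset_span ⟨j, hj, rfl⟩)
    obtain ⟨e, he⟩ := exists_coeff K v (v j) (by
      rw [hvKT]; exact subset_span ⟨j, hj, rfl⟩)
    -- key identity : e k • b k = c k • b j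
    have hkey : ∀ k ∈ K, ∀ m, e k * b k m = c k * b j m := by
      intro k hk m
      have h1 : ∑ k ∈ K, (e k * b k m) • a k = b j m • a j := hslice e (a j) (b j) m he.symm
      have h2 : ∑ k ∈ K, (e k * b k m - c k * b j m) • a k = 0 := by
        rw [Finset.sum_congr rfl (fun k _ => sub_smul (e k * b k m) (c k * b j m) (a k)),
          Finset.sum_sub_distrib, h1, hc]
        rw [Finset.smul_sum]
        rw [Finset.sum_congr rfl (fun k _ => ?_), sub_self]
        rw [smul_smul, mul_comm (b j m) (c k)]
      have := hindA _ h2 k hk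
      exact sub_eq_zero.mp this
    refine ⟨c, hc, ?_, ?_⟩
    · intro k hk hck
      -- if e k = 0 then c k • b j = 0 so b j = 0, contradiction
      have hek : e k ≠ 0 := by
        intro hek
        apply hb j hj
        funext m
        have := hkey k hk m
        rw [hek, zero_mul] at this
        have := this.symm
        rcases mul_eq_zero.mp this with h | h
        · exact absurd h hck
        · exact h
      refine ⟨(c k)⁻¹ * e k, mul_ne_zero (inv_ne_zero hck) hek, ?_⟩
      funext m
      have := hkey k hk m
      simp only [Pi.smul_apply, smul_eq_mul]
      have h3 : b j m = (c k)⁻¹ * (e k * b k m) := by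
        rw [this, ← mul_assoc, inv_mul_cancel₀ hck, one_mul]
      rw [h3]; ring
    · by_contra hcon
      push_neg at hcon
      apply ha j hj
      rw [hc]
      apply Finset.sum_eq_zero
      intro k hk
      rw [hcon k hk, zero_smul]
  -- the projection to representatives
  set Rel : Fin n → Fin n → Prop := fun j k => ∃ t : ℂ, t ≠ 0 ∧ b j = t • b k with hRel
  have hRrefl : ∀ j, Rel j j := fun j => ⟨1, one_ne_zero, (one_smul _ _).symm⟩
  have hRsymm : ∀ {j k}, Rel j k → Rel k j := by
    rintro j k ⟨t, ht, htb⟩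
    exact ⟨t⁻¹, inv_ne_zero ht, by rw [htb, smul_smul, inv_mul_cancel₀ ht, one_smul]⟩
  have hRtrans : ∀ {j k l}, Rel j k → Rel k l → Rel j l := by
    rintro j k l ⟨t, ht, htb⟩ ⟨u, hu, hub⟩
    exact ⟨t * u, mul_ne_zero ht hu, by rw [htb, hub, smul_smul]⟩
  set π : Fin n → Fin n := fun j =>
    if h : (K.filter (fun k => Rel j k)).Nonempty then (K.filter (fun k => Rel j k)).min' h
    else j with hπ
  have hπspec : ∀ j ∈ T, π j ∈ K ∧ Rel j (π j) := by
    intro j hj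
    obtain ⟨c, _, hrel, ⟨k, hk, hck⟩⟩ := hstep j hj
    have hne : (K.filter (fun k => Rel j k)).Nonempty :=
      ⟨k, Finset.mem_filter.mpr ⟨hk, hrel k hk hck⟩⟩
    have := Finset.min'_mem _ hne
    rw [Finset.mem_filter] at this
    rw [hπ]
    simp only [dif_pos hne]
    exact this
  have hπconst : ∀ j ∈ T, ∀ j', Rel j j' → π j = π j' := by
    intro j hj j' hjj
    have hfilt : K.filter (fun k => Rel j k) = K.filter (fun k => Rel j' k) := by
      apply Finset.filter_congr
      intro k _
      constructor
      · intro h; exact hRtrans (hRsymm hjj) h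
      · intro h; exact hRtrans hjj h
    have hne : (K.filter (fun k => Rel j k)).Nonempty := by
      obtain ⟨hπK, hπR⟩ := hπspec j hj
      exact ⟨π j, Finset.mem_filter.mpr ⟨hπK, hπR⟩⟩
    have hne' : (K.filter (fun k => Rel j' k)).Nonempty := hfilt ▸ hne
    rw [hπ]
    simp only [dif_pos hne, dif_pos hne']
    congr 1
  -- assemble the conclusion
  refine ⟨K, π, hKT, hcard, fun j hj => (hπspec j hj).1, fun j hj => ?_, fun j hj D hD => ?_⟩
  · obtain ⟨_, ⟨t, ht, htb⟩⟩ := hπspec j hj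
    exact ⟨t, ht, htb⟩
  · obtain ⟨c, hc, hrel, _⟩ := hstep j hj
    rw [hc]
    apply Submodule.sum_mem
    intro k hk
    by_cases hck : c k = 0
    · rw [hck, zero_smul]; exact Submodule.zero_mem _
    · apply Submodule.smul_mem
      apply subset_span
      refine ⟨k, ?_, rfl⟩
      apply hD
      refine ⟨hk, ?_⟩
      exact (hπconst k (hKT hk) j (hRsymm (hrel k hk hck))).symm ▸ rfl
variable {η ι : Type*} [Fintype η]

def q (v : η → ℂ) : ℝ := ∑ j, Complex.normSq (v j)

lemma q_nonneg (v : η → ℂ) : 0 ≤ q v := Finset.sum_nonneg fun _ _ => Complex.normSq_nonneg _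

lemma q_pos {v : η → ℂ} (hv : v ≠ 0) : 0 < q v := by
  rcases (q_nonneg v).lt_or_eq with h | h
  · exact h
  · exfalso; apply hv
    funext j
    have := (Finset.sum_eq_zero_iff_of_nonneg (fun i _ => Complex.normSq_nonneg (v i))).mp h.symm
    exact Complex.normSq_eq_zero.mp (this j (Finset.mem_univ j))

lemma dot_self_eq (v : η → ℂ) : star v ⬝ᵥ v = (q v : ℂ) := by
  simp only [dotProduct, Pi.star_apply, q, Complex.ofReal_sum]
  exact Finset.sum_congr rfl fun j _ => by
    rw [Complex.star_def, ← Complex.normSq_eq_conj_mul_self]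

def nv (v : η → ℂ) : η → ℂ := (((Real.sqrt (q v))⁻¹ : ℝ) : ℂ) • v

lemma nv_unit {v : η → ℂ} (hv : v ≠ 0) : star (nv v) ⬝ᵥ nv v = 1 := by
  have hq := q_pos hv
  simp only [nv, star_smul, smul_dotProduct, dotProduct_smul, dot_self_eq, smul_eq_mul]
  rw [Complex.star_def, Complex.conj_ofReal]
  rw [← Complex.ofReal_mul, ← Complex.ofReal_mul]
  norm_cast
  rw [← Real.sqrt_inv]
  rw [← mul_assoc,  Real.mul_self_sqrt (inv_nonneg.mpr hq.le), inv_mul_cancel₀ hq.ne']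

lemma eq_smul_nv (v : η → ℂ) (hv : v ≠ 0) : v = ((Real.sqrt (q v) : ℝ) : ℂ) • nv v := by
  have hq := q_pos hv
  rw [nv, smul_smul, ← Complex.ofReal_mul, mul_inv_cancel₀ (Real.sqrt_pos.mpr hq).ne']
  simp
variable {dA dB : ℕ}

lemma sum_kron {s : Finset ι} (M : ι → Matrix (Fin dA) (Fin dA) ℂ)
    (B : Matrix (Fin dB) (Fin dB) ℂ) :
    (∑ i ∈ s, M i) ⊗ₖ B = ∑ i ∈ s, (M i ⊗ₖ B) := by
  ext ⟨j, m⟩ ⟨k, l⟩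
  simp [kroneckerMap_apply, Matrix.sum_apply, Finset.sum_mul]

lemma trB_smul (c : ℂ) (M : Matrix (Fin dA × Fin dB) (Fin dA × Fin dB) ℂ) :
    (Matrix.of fun j k => ∑ m : Fin dB, (c • M) (j, m) (k, m)) =
      c • Matrix.of fun j k => ∑ m : Fin dB, M (j, m) (k, m) := by
  ext j k
  simp [Finset.mul_sum]

lemma psd_sum_smul_kB (s : Finset ι) (c : ι → ℝ) (hc : ∀ i ∈ s, 0 ≤ c i) (w : ι → η → ℂ)
    (hkb : ∀ v : η → ℂ, (kB v).PosSemidef) :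
    (∑ i ∈ s, (c i : ℂ) • kB (w i)).PosSemidef := by
  classical
  induction s using Finset.induction with
  | empty => simpa using Matrix.PosSemidef.zero
  | insert x s' hx ih =>
    rw [Finset.sum_insert hx]
    apply Matrix.PosSemidef.add
    · have h0 : (0:ℝ) ≤ c x := hc x (Finset.mem_insert_self x s')
      rw [Matrix.posSemidef_iff_dotProduct_mulVec]
      constructor
      · unfold Matrix.IsHermitian
        rw [Matrix.conjTranspose_smul, (hkb (w x)).1.eq]
        congr 1
        simp [Complex.star_def, Complex.conj_ofReal]
      · intro y
        rw [Matrix.smul_mulVec, dotProduct_smul, smul_eq_mul]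
        have := (hkb (w x)).dotProduct_mulVec_nonneg y
        have hcx : (0:ℂ) ≤ (c x : ℂ) := by exact_mod_cast h0
        exact mul_nonneg hcx this
    · exact ih (fun i hi => hc i (Finset.mem_insert_of_mem hi))

lemma mulVec_sum_smul_kB (s : Finset ι) (c : ι → ℂ) (w : ι → η → ℂ) (x : η → ℂ) :
    (∑ i ∈ s, c i • kB (w i)).mulVec x = ∑ i ∈ s, (c i * (star (w i) ⬝ᵥ x)) • w i := by
  ext p
  simp only [Matrix.mulVec, dotProduct, Finset.sum_apply, Matrix.sum_apply, Matrix.smul_apply,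
    kB, vecMulVec_apply, smul_eq_mul, Pi.smul_apply, Pi.star_apply]
  rw [Finset.sum_congr rfl (fun q _ => Finset.sum_mul s (fun i => _) (x q)), Finset.sum_comm]
  apply Finset.sum_congr rfl
  intro i _
  simp only [Finset.mul_sum, Finset.sum_mul]
  apply Finset.sum_congr rfl
  intro j _
  ring

lemma rank_le_of_mulVec_mem [DecidableEq η] (M : Matrix η η ℂ) (W : Submodule ℂ (η → ℂ))
    (h : ∀ x, M.mulVec x ∈ W) : M.rank ≤ finrank ℂ W := by
  rw [Matrix.rank]
  apply Submodule.finrank_mono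
  rintro _ ⟨x, rfl⟩
  exact h x

lemma transport {M : Type*} [AddCommMonoid M] {α : Type*} (P : Finset α) (d : ℕ)
    (hcard : P.card ≤ d) (F : α → M) :
    ∑ p ∈ P, F p =
      ∑ i : Fin d, if h : (i : ℕ) < P.card then F (P.equivFin.symm ⟨i, h⟩ : ↥P) else 0 := by
  classical
  rw [← Finset.sum_coe_sort P F, ← Equiv.sum_comp P.equivFin.symm (fun p : ↥P => F ↑p)]
  have h2 : ∀ j : Fin P.card, F (P.equivFin.symm j) =
      if h : (j : ℕ) < P.card then F (P.equivFin.symm ⟨(j : ℕ), h⟩ : ↥P) else 0 := by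
    intro j
    rw [dif_pos j.2]
  rw [Finset.sum_congr rfl (fun j _ => h2 j)]
  rw [Fin.sum_univ_eq_sum_range (fun i => if h : i < P.card then F (P.equivFin.symm ⟨i, h⟩ : ↥P) else 0) P.card,
     Fin.sum_univ_eq_sum_range (fun i => if h : i < P.card then F (P.equivFin.symm ⟨i, h⟩ : ↥P) else 0) d]
  exact Finset.sum_subset (Finset.range_subset_range.mpr hcard) (fun i _ hi => dif_neg (by simpa using hi))


/-- A separable bipartite state `ρ_AB` on `ℂ^{d_A} ⊗ ℂ^{d_B}` with
`rank ρ_AB = d` and `rank ρ_A = d` is a convex combination of at most `d` pure product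
states. -/
theorem separable_convex_combination_of_rank {dA dB d : ℕ}
    (ρ : Matrix (Fin dA × Fin dB) (Fin dA × Fin dB) ℂ)
    (hpsd : ρ.PosSemidef) (htr : ρ.trace = 1) (hsep : MatrixSeparable ρ)
    (hrank : ρ.rank = d) (hrankA : (trB ρ).rank = d) :
    ∃ (lam : Fin d → ℝ) (a : Fin d → Fin dA → ℂ) (b : Fin d → Fin dB → ℂ),
      (∀ i, 0 ≤ lam i) ∧ (∑ i, lam i) = 1 ∧
      (∀ i, star (a i) ⬝ᵥ a i = 1) ∧ (∀ i, star (b i) ⬝ᵥ b i = 1) ∧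
      ρ = ∑ i, (lam i : ℂ) • (ketBra (a i) ⊗ₖ ketBra (b i)) := by
  classical
  obtain ⟨n, lam0, a0, b0, hlam0, hρ0⟩ := hsep
  have hdA : 0 < dA := by
    rcases Nat.eq_zero_or_pos dA with h | h
    · subst h
      rw [Matrix.trace] at htr
      simp [Finset.univ_eq_empty] at htr
    · exact h
  have hdB : 0 < dB := by
    rcases Nat.eq_zero_or_pos dB with h | h
    · subst h
      rw [Matrix.trace] at htr
      simp [Finset.univ_eq_empty] at htr
    · exact h
  set T : Finset (Fin n) := Finset.univ.filter (fun i => lam0 i ≠ 0 ∧ a0 i ≠ 0 ∧ b0 i ≠ 0)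
    with hT
  set a : Fin n → Fin dA → ℂ := fun i => nv (a0 i) with hadef
  set b : Fin n → Fin dB → ℂ := fun i => nv (b0 i) with hbdef
  set lam : Fin n → ℝ := fun i => lam0 i * q (a0 i) * q (b0 i) with hlamdef
  have hmemT : ∀ i ∈ T, lam0 i ≠ 0 ∧ a0 i ≠ 0 ∧ b0 i ≠ 0 := by
    intro i hi
    exact (Finset.mem_filter.mp hi).2
  have hlampos : ∀ i ∈ T, 0 < lam i := by
    intro i hi
    obtain ⟨h1, h2, h3⟩ := hmemT i hi
    exact mul_pos (mul_pos ((hlam0 i).lt_of_ne (Ne.symm h1)) (q_pos h2)) (q_pos h3)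
  have haunit : ∀ i ∈ T, star (a i) ⬝ᵥ a i = 1 := fun i hi => nv_unit (hmemT i hi).2.1
  have hbunit : ∀ i ∈ T, star (b i) ⬝ᵥ b i = 1 := fun i hi => nv_unit (hmemT i hi).2.2
  have ha : ∀ i ∈ T, a i ≠ 0 := by
    intro i hi h0
    have := haunit i hi
    rw [h0] at this
    simp at this
  have hb : ∀ i ∈ T, b i ≠ 0 := by
    intro i hi h0
    have := hbunit i hi
    rw [h0] at this
    simp at this
  -- rewrite each term of the decomposition
  have hterm : ∀ i : Fin n, (lam0 i : ℂ) • (ketBra (a0 i) ⊗ₖ ketBra (b0 i)) =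
      if i ∈ T then (lam i : ℂ) • kB (pv (a i) (b i)) else 0 := by
    intro i
    by_cases hi : i ∈ T
    · obtain ⟨h1, h2, h3⟩ := hmemT i hi
      rw [if_pos hi, ketBra_eq_kB, ketBra_eq_kB, kB_kron]
      have hpa : pv (a0 i) (b0 i) =
          ((Real.sqrt (q (a0 i)) * Real.sqrt (q (b0 i)) : ℝ) : ℂ) • pv (a i) (b i) := by
        funext p
        have h2' := eq_smul_nv (a0 i) h2
        have h3' := eq_smul_nv (b0 i) h3
        simp only [pv, Pi.smul_apply, smul_eq_mul, Complex.ofReal_mul]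
        calc a0 i p.1 * b0 i p.2
            = (((Real.sqrt (q (a0 i)) : ℝ) : ℂ) * a i p.1) *
              (((Real.sqrt (q (b0 i)) : ℝ) : ℂ) * b i p.2) := by
              rw [hadef, hbdef]
              congr 1
              · exact congrFun h2' p.1
              · exact congrFun h3' p.2
          _ = _ := by ring
      rw [hpa, kB_smul, smul_smul, hlamdef]
      congr 1
      rw [Complex.star_def, Complex.conj_ofReal]
      push_cast
      rw [← Complex.ofReal_mul, ← Complex.ofReal_mul]
      rw [show Real.sqrt (q (a0 i)) * Real.sqrt (q (b0 i)) *
          (Real.sqrt (q (a0 i)) * Real.sqrt (q (b0 i))) = 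
          (Real.sqrt (q (a0 i)) * Real.sqrt (q (a0 i))) *
          (Real.sqrt (q (b0 i)) * Real.sqrt (q (b0 i))) from by ring]
      rw [Real.mul_self_sqrt (q_nonneg _), Real.mul_self_sqrt (q_nonneg _)]
      push_cast
      ring
    · rw [if_neg hi]
      rw [hT] at hi
      simp only [Finset.mem_filter, Finset.mem_univ, true_and, not_and_or, not_not] at hi
      rcases hi with h | h | h
      · rw [h]; simp
      · rw [h]
        have : ketBra (0 : Fin dA → ℂ) = 0 := by
          ext j k; simp [ketBra, vecMulVec_apply]
        rw [this, Matrix.zero_kronecker, smul_zero]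
      · rw [h]
        have : ketBra (0 : Fin dB → ℂ) = 0 := by
          ext j k; simp [ketBra, vecMulVec_apply]
        rw [this, Matrix.kronecker_zero, smul_zero]
  have hρ : ρ = ∑ i ∈ T, (lam i : ℂ) • kB (pv (a i) (b i)) := by
    rw [hρ0, Finset.sum_congr rfl (fun i _ => hterm i), Finset.sum_ite_mem,
      Finset.univ_inter]
  -- rank of ρ
  have hrkρ : finrank ℂ (span ℂ ((fun i => pv (a i) (b i)) '' ↑T)) = d := by
    rw [← hrank, hρ, ← Finset.sum_coe_sort T (fun i => (lam i : ℂ) • kB (pv (a i) (b i))),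
      rank_sum_kB (fun i : ↥T => pv (a (i : Fin n)) (b (i : Fin n)))
        (fun i : ↥T => lam (i : Fin n)) (fun i => hlampos i i.2),
      range_coe_image T (fun i => pv (a i) (b i))]
  -- the reduced state
  have htrB : trB ρ = ∑ i ∈ T, (lam i : ℂ) • kB (a i) := by
    rw [hρ]
    ext j k
    simp only [trB, Matrix.of_apply, Matrix.sum_apply, Matrix.smul_apply, smul_eq_mul, kB,
      vecMulVec_apply, Pi.star_apply, pv]
    rw [Finset.sum_comm]
    apply Finset.sum_congr rfl
    intro i hi
    have hb1 : ∑ m : Fin dB, b i m * star (b i m) = 1 := by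
      have h := hbunit i hi
      rw [dotProduct] at h
      rw [← h]
      exact Finset.sum_congr rfl fun m _ => by simp [mul_comm]
    calc ∑ m : Fin dB, (lam i : ℂ) * ((a i j * b i m) * star ((fun p => a i p.1 * b i p.2) (k, m)))
        = (lam i : ℂ) * ((a i j * star (a i k)) * ∑ m : Fin dB, b i m * star (b i m)) := by
          rw [Finset.mul_sum, Finset.mul_sum]
          exact Finset.sum_congr rfl fun m _ => by
            simp only [star_mul']
            ring
      _ = (lam i : ℂ) * (a i j * star (a i k)) := by rw [hb1, mul_one]
  have hrkA : finrank ℂ (span ℂ (a '' ↑T)) = d := by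
    rw [← hrankA, htrB, ← Finset.sum_coe_sort T (fun i => (lam i : ℂ) • kB (a i)),
      rank_sum_kB (fun i : ↥T => a (i : Fin n)) (fun i : ↥T => lam (i : Fin n))
        (fun i => hlampos i i.2),
      range_coe_image T a]
  -- structural decomposition
  obtain ⟨K, π, hKT, hcardK, hπmem, hrel, hspan⟩ :=
    structure_lemma T a b ha hb (by rw [hrkρ, hrkA])
  have hKcard : K.card = d := hcardK.trans hrkA
  have hrel' : ∀ j : Fin n, ∃ t : ℂ, j ∈ T → (t ≠ 0 ∧ b j = t • b (π j)) := by
    intro j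
    by_cases hj : j ∈ T
    · obtain ⟨t, ht⟩ := hrel j hj
      exact ⟨t, fun _ => ht⟩
    · exact ⟨1, fun h => absurd h hj⟩
  choose t ht using hrel'
  set σ : Fin n → Matrix (Fin dA) (Fin dA) ℂ := fun k =>
    ∑ j ∈ T.filter (fun j => π j = k), (lam j : ℂ) • kB (t j • a j) with hσ
  have hρ2 : ρ = ∑ k ∈ K, σ k ⊗ₖ kB (b k) := by
    rw [hρ, ← Finset.sum_fiberwise_of_maps_to hπmem
      (fun j => (lam j : ℂ) • kB (pv (a j) (b j)))]
    apply Finset.sum_congr rfl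
    intro k hk
    rw [hσ, sum_kron]
    apply Finset.sum_congr rfl
    intro j hj
    obtain ⟨hjT, hπj⟩ := Finset.mem_filter.mp hj
    obtain ⟨ht0, htb⟩ := ht j hjT
    have hpv : pv (a j) (b j) = pv (t j • a j) (b k) := by
      funext p
      show a j p.1 * b j p.2 = (t j • a j) p.1 * b k p.2
      have hb2 : b j p.2 = t j * b k p.2 := by rw [htb, hπj]; simp
      rw [hb2]
      simp only [Pi.smul_apply, smul_eq_mul]
      ring
    rw [Matrix.smul_kronecker, kB_kron, hpv]
  have hσpsd : ∀ k ∈ K, (σ k).PosSemidef := by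
    intro k _
    rw [hσ]
    exact psd_sum_smul_kB _ _ (fun j hj => (hlampos j (Finset.mem_filter.mp hj).1).le) _
      kB_posSemidef
  have hrkσ : ∀ k ∈ K, (σ k).rank ≤ (K.filter (fun m => π m = k)).card := by
    intro k hk
    have hW : ∀ x, (σ k).mulVec x ∈ span ℂ (a '' ↑(K.filter (fun m => π m = k))) := by
      intro x
      rw [hσ, mulVec_sum_smul_kB]
      apply Submodule.sum_mem
      intro j hj
      apply Submodule.smul_mem
      obtain ⟨hjT, hπj⟩ := Finset.mem_filter.mp hj
      apply Submodule.smul_mem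
      apply hspan j hjT
      intro m hm
      rw [Finset.mem_filter]
      exact ⟨hm.1, hm.2.trans hπj⟩
    calc (σ k).rank ≤ finrank ℂ (span ℂ (a '' ↑(K.filter (fun m => π m = k)))) :=
          rank_le_of_mulVec_mem _ _ hW
      _ ≤ ((K.filter (fun m => π m = k)).image a).card := by
          rw [← Finset.coe_image]
          exact finrank_span_finset_le_card _
      _ ≤ (K.filter (fun m => π m = k)).card := Finset.card_image_le
  -- spectral decomposition of each σ k
  have hspec : ∀ k : Fin n, ∃ (μ : Fin dA → ℝ) (u : Fin dA → Fin dA → ℂ), k ∈ K →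
      ((∀ m, 0 ≤ μ m) ∧ (∀ m, star (u m) ⬝ᵥ u m = 1) ∧
        σ k = ∑ m, (μ m : ℂ) • kB (u m) ∧
        Fintype.card {m // μ m ≠ 0} = (σ k).rank) := by
    intro k
    by_cases hk : k ∈ K
    · obtain ⟨μ, u, h1, h2, h3, h4⟩ := spectral (σ k) (hσpsd k hk)
      exact ⟨μ, u, fun _ => ⟨h1, h2, h3, h4⟩⟩
    · exact ⟨0, 0, fun h => absurd h hk⟩
  choose μ u hμu using hspec
  -- ρ as a double sum
  have hρ3 : ρ = ∑ p ∈ K ×ˢ (Finset.univ : Finset (Fin dA)),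
      (μ p.1 p.2 : ℂ) • (kB (u p.1 p.2) ⊗ₖ kB (b p.1)) := by
    rw [hρ2, Finset.sum_product]
    apply Finset.sum_congr rfl
    intro k hk
    obtain ⟨_, _, hσk, _⟩ := hμu k hk
    rw [hσk, sum_kron]
    apply Finset.sum_congr rfl
    intro m _
    rw [Matrix.smul_kronecker]
  set P : Finset (Fin n × Fin dA) :=
    (K ×ˢ (Finset.univ : Finset (Fin dA))).filter (fun p => μ p.1 p.2 ≠ 0) with hP
  have hPsub : ∀ p ∈ P, p.1 ∈ K ∧ μ p.1 p.2 ≠ 0 := by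
    intro p hp
    rw [hP, Finset.mem_filter] at hp
    exact ⟨(Finset.mem_product.mp hp.1).1, hp.2⟩
  have hρ4 : ρ = ∑ p ∈ P, (μ p.1 p.2 : ℂ) • (kB (u p.1 p.2) ⊗ₖ kB (b p.1)) := by
    rw [hρ3, hP]
    rw [Finset.sum_filter_of_ne]
    intro p _ hne hzero
    apply hne
    rw [hzero]
    push_cast
    rw [zero_smul]
  -- cardinality bound
  have hPcard : P.card ≤ d := by
    have h1 : P.card = ∑ k ∈ K, (P.filter (fun p => p.1 = k)).card :=
      Finset.card_eq_sum_card_fiberwise (fun p hp => (hPsub p hp).1)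
    have h2 : ∀ k ∈ K, (P.filter (fun p => p.1 = k)).card = (σ k).rank := by
      intro k hk
      obtain ⟨_, _, _, h4⟩ := hμu k hk
      rw [← h4, Fintype.card_subtype]
      apply Finset.card_bij (fun p _ => p.2)
      · intro p hp
        rw [Finset.mem_filter] at hp ⊢
        obtain ⟨hpP, hpk⟩ := hp
        exact ⟨Finset.mem_univ _, by rw [← hpk]; exact (hPsub p hpP).2⟩
      · intro p hp p' hp' hpp
        rw [Finset.mem_filter] at hp hp'
        ext
        · rw [hp.2, hp'.2]
        · rw [hpp]
      · intro m hm
        rw [Finset.mem_filter] at hm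
        refine ⟨(k, m), ?_, rfl⟩
        rw [Finset.mem_filter, hP, Finset.mem_filter, Finset.mem_product]
        exact ⟨⟨⟨hk, Finset.mem_univ _⟩, hm.2⟩, rfl⟩
    calc P.card = ∑ k ∈ K, (P.filter (fun p => p.1 = k)).card := h1
      _ = ∑ k ∈ K, (σ k).rank := Finset.sum_congr rfl h2
      _ ≤ ∑ k ∈ K, (K.filter (fun m => π m = k)).card := Finset.sum_le_sum hrkσ
      _ = K.card := (Finset.card_eq_sum_card_fiberwise (fun m hm => hπmem m (hKT hm))).symm
      _ = d := hKcard
  -- total weight is 1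
  have htr2 : ∑ p ∈ P, μ p.1 p.2 = 1 := by
    have hc : (↑(∑ p ∈ P, μ p.1 p.2) : ℂ) = 1 := by
      push_cast
      rw [← htr, hρ4, Matrix.trace_sum]
      apply Finset.sum_congr rfl
      intro p hp
      obtain ⟨hk, _⟩ := hPsub p hp
      rw [Matrix.trace_smul, Matrix.trace_kronecker, kB_trace, kB_trace,
        (hμu p.1 hk).2.1 p.2, hbunit p.1 (hKT hk), mul_one, smul_eq_mul, mul_one]
    exact_mod_cast hc
  -- final packaging
  have hdef1 : ∀ {dd : ℕ} (j0 : Fin dd), star (Pi.single j0 (1:ℂ)) ⬝ᵥ Pi.single j0 1 = 1 := by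
    intro dd j0
    simp [dotProduct, Pi.single_apply, apply_ite (star : ℂ → ℂ)]
  set e := P.equivFin with he
  set lam' : Fin d → ℝ := fun i =>
    if h : (i : ℕ) < P.card then
      (fun p : Fin n × Fin dA => μ p.1 p.2) ↑(e.symm ⟨(i : ℕ), h⟩) else 0 with hlam'
  set a' : Fin d → Fin dA → ℂ := fun i =>
    if h : (i : ℕ) < P.card then
      u (↑(e.symm ⟨(i : ℕ), h⟩) : Fin n × Fin dA).1 (↑(e.symm ⟨(i : ℕ), h⟩) : Fin n × Fin dA).2
    else Pi.single ⟨0, hdA⟩ 1 with ha'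
  set b' : Fin d → Fin dB → ℂ := fun i =>
    if h : (i : ℕ) < P.card then b (↑(e.symm ⟨(i : ℕ), h⟩) : Fin n × Fin dA).1
    else Pi.single ⟨0, hdB⟩ 1 with hb'
  refine ⟨lam', a', b', ?_, ?_, ?_, ?_, ?_⟩
  · intro i
    by_cases h : (i : ℕ) < P.card
    · rw [hlam']
      simp only [dif_pos h]
      have hp := (e.symm ⟨(i : ℕ), h⟩).2
      exact ((hμu _ (hPsub _ hp).1).1) _
    · rw [hlam']; simp only [dif_neg h]; exact le_refl 0
  · exact (transport P d hPcard (fun p : Fin n × Fin dA => μ p.1 p.2)).symm.trans htr2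
  · intro i
    by_cases h : (i : ℕ) < P.card
    · rw [ha']
      simp only [dif_pos h]
      have hp := (e.symm ⟨(i : ℕ), h⟩).2
      exact ((hμu _ (hPsub _ hp).1).2.1) _
    · rw [ha']; simp only [dif_neg h]; exact hdef1 _
  · intro i
    by_cases h : (i : ℕ) < P.card
    · rw [hb']
      simp only [dif_pos h]
      have hp := (e.symm ⟨(i : ℕ), h⟩).2
      exact hbunit _ (hKT (hPsub _ hp).1)
    · rw [hb']; simp only [dif_neg h]; exact hdef1 _
  · have hterm2 : ∀ i : Fin d, (lam' i : ℂ) • (ketBra (a' i) ⊗ₖ ketBra (b' i)) =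
        if h : (i : ℕ) < P.card then
          (fun p : Fin n × Fin dA => (μ p.1 p.2 : ℂ) • (kB (u p.1 p.2) ⊗ₖ kB (b p.1)))
            ↑(e.symm ⟨(i : ℕ), h⟩)
        else 0 := by
      intro i
      by_cases h : (i : ℕ) < P.card
      · rw [dif_pos h, hlam', ha', hb']
        simp only [dif_pos h]
        rfl
      · rw [dif_neg h, hlam']
        simp only [dif_neg h]
        push_cast
        rw [zero_smul]
    rw [Finset.sum_congr rfl (fun i _ => hterm2 i),
      ← transport P d hPcard
        (fun p : Fin n × Fin dA => (μ p.1 p.2 : ℂ) • (kB (u p.1 p.2) ⊗ₖ kB (b p.1)))]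
    exact hρ4
end
end

section
/- Let d_A ≥ 3, d_B ≥ 1. Let Q be a positive semidefinite matrix indexed by (Fin d_A) × (Fin d_B) that is supported on the first two values of the A-index (i.e. Q_{(j,m),(k,n)} = 0 unless j, k ∈ {1,2}) and satisfies Tr_B Q = |e₁⟩⟨e₁| + |e₂⟩⟨e₂| (so Tr Q = 2), and let ψ₃,…,ψ_{d_A} be unit vectors in ℂ^{d_B}. Then γ = (1/d_A) ( Q + Σ_{k=3}^{d_A} E_{kk} ⊗ |ψ_k⟩⟨ψ_k| ) is a bipartite state on ℂ^{d_A} ⊗ ℂ^{d_B}, and γ is separable if and only if (1/2) Q is separable. -/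
open Matrix Kronecker
open scoped ComplexOrder

noncomputable section

lemma ketBra_apply {d : ℕ} (v : Fin d → ℂ) (i j : Fin d) :
    ketBra v i j = v i * star (v j) := rfl

lemma vecMulVec_star_posSemidef {ι : Type*} [Fintype ι] (v : ι → ℂ) :
    (vecMulVec v (star v)).PosSemidef := by
  rw [posSemidef_iff_dotProduct_mulVec]
  constructor
  · ext i j
    simp only [conjTranspose_apply, vecMulVec_apply, Pi.star_apply, star_mul', star_star]
    ring
  · intro x
    have h : star x ⬝ᵥ (vecMulVec v (star v)) *ᵥ x = star (star v ⬝ᵥ x) * (star v ⬝ᵥ x) := by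
      simp only [dotProduct, mulVec, vecMulVec_apply, Pi.star_apply, star_sum, star_mul',
        star_star, Finset.sum_mul, Finset.mul_sum]
      rw [Finset.sum_comm]
      exact Finset.sum_congr rfl fun i _ => Finset.sum_congr rfl fun j _ => by ring
    rw [h]
    exact star_mul_self_nonneg _

lemma ketBra_kron {dA dB : ℕ} (a : Fin dA → ℂ) (b : Fin dB → ℂ) :
    ketBra a ⊗ₖ ketBra b
      = vecMulVec (fun p : Fin dA × Fin dB => a p.1 * b p.2)
          (star fun p : Fin dA × Fin dB => a p.1 * b p.2) := by
  ext ⟨i, m⟩ ⟨j, n⟩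
  simp only [kroneckerMap_apply, ketBra, vecMulVec_apply, Pi.star_apply, star_mul']
  ring

lemma std_eq_ketBra {d : ℕ} (k : Fin d) :
    Matrix.single k k (1 : ℂ) = ketBra (Pi.single k 1) := by
  ext i j
  by_cases h1 : i = k <;> by_cases h2 : j = k <;>
    simp [Matrix.single, ketBra, vecMulVec_apply, Pi.single_apply, h1, h2,
      fun h => (Ne.symm h : k ≠ i), fun h => (Ne.symm h : k ≠ j)]

lemma MatrixSeparable.zero {dA dB : ℕ} :
    MatrixSeparable (0 : Matrix (Fin dA × Fin dB) (Fin dA × Fin dB) ℂ) :=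
  ⟨0, Fin.elim0, Fin.elim0, Fin.elim0, fun i => i.elim0, by simp⟩

lemma MatrixSeparable.smul' {dA dB : ℕ} {γ : Matrix (Fin dA × Fin dB) (Fin dA × Fin dB) ℂ}
    (c : ℝ) (hc : 0 ≤ c) (h : MatrixSeparable γ) : MatrixSeparable ((c : ℂ) • γ) := by
  obtain ⟨n, lam, a, b, hlam, rfl⟩ := h
  refine ⟨n, fun i => c * lam i, a, b, fun i => mul_nonneg hc (hlam i), ?_⟩
  rw [Finset.smul_sum]
  refine Finset.sum_congr rfl fun i _ => ?_
  rw [smul_smul]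
  push_cast
  ring_nf

lemma MatrixSeparable.add' {dA dB : ℕ} {γ₁ γ₂ : Matrix (Fin dA × Fin dB) (Fin dA × Fin dB) ℂ}
    (h1 : MatrixSeparable γ₁) (h2 : MatrixSeparable γ₂) : MatrixSeparable (γ₁ + γ₂) := by
  obtain ⟨n1, l1, a1, b1, hl1, rfl⟩ := h1
  obtain ⟨n2, l2, a2, b2, hl2, rfl⟩ := h2
  refine ⟨n1 + n2, Fin.append l1 l2, Fin.append a1 a2, Fin.append b1 b2, ?_, ?_⟩
  · intro i
    refine Fin.addCases (fun i => ?_) (fun i => ?_) i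
    · simpa using hl1 i
    · simpa using hl2 i
  · rw [Fin.sum_univ_add]
    simp [Fin.append_left, Fin.append_right]

lemma MatrixSeparable.sum' {dA dB : ℕ} {ι : Type*} (s : Finset ι)
    (f : ι → Matrix (Fin dA × Fin dB) (Fin dA × Fin dB) ℂ)
    (h : ∀ i ∈ s, MatrixSeparable (f i)) : MatrixSeparable (∑ i ∈ s, f i) :=
  Finset.sum_induction f MatrixSeparable (fun _ _ => MatrixSeparable.add') MatrixSeparable.zero h

lemma MatrixSeparable.kron {dA dB : ℕ} (a : Fin dA → ℂ) (b : Fin dB → ℂ) :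
    MatrixSeparable (ketBra a ⊗ₖ ketBra b) :=
  ⟨1, fun _ => 1, fun _ => a, fun _ => b, fun _ => zero_le_one, by simp⟩

lemma posSemidef_add {ι : Type*} [Fintype ι] {A B : Matrix ι ι ℂ}
    (hA : A.PosSemidef) (hB : B.PosSemidef) : (A + B).PosSemidef := by
  refine posSemidef_iff_dotProduct_mulVec.mpr ⟨hA.1.add hB.1, fun x => ?_⟩
  rw [add_mulVec, dotProduct_add]
  exact add_nonneg (hA.dotProduct_mulVec_nonneg x) (hB.dotProduct_mulVec_nonneg x)

lemma posSemidef_sum {ι κ : Type*} [Fintype ι] (s : Finset κ) (f : κ → Matrix ι ι ℂ)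
    (h : ∀ i ∈ s, (f i).PosSemidef) : (∑ i ∈ s, f i).PosSemidef :=
  Finset.sum_induction f Matrix.PosSemidef (fun _ _ => posSemidef_add)
    ⟨isHermitian_zero, by simp⟩ h

lemma posSemidef_real_smul {ι : Type*} [Fintype ι] {A : Matrix ι ι ℂ}
    (hA : A.PosSemidef) {c : ℝ} (hc : 0 ≤ c) : ((c : ℂ) • A).PosSemidef := by
  refine posSemidef_iff_dotProduct_mulVec.mpr ⟨?_, fun x => ?_⟩
  · rw [IsHermitian, conjTranspose_smul, hA.1.eq]
    simp
  · rw [smul_mulVec, dotProduct_smul, smul_eq_mul]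
    exact mul_nonneg (by exact_mod_cast Complex.zero_le_real.mpr hc) (hA.dotProduct_mulVec_nonneg x)

/-- Let `Q` be positive semidefinite on `ℂ^{d_A} ⊗ ℂ^{d_B}` (`d_A ≥ 3`),
supported on the first two values of the `A`-index, with `Tr_B Q = |e₁⟩⟨e₁| + |e₂⟩⟨e₂|`, and
let `ψ₃, …, ψ_{d_A}` be unit vectors in `ℂ^{d_B}`. Then
`γ = (1/d_A)(Q + Σ_{k=3}^{d_A} E_{kk} ⊗ |ψ_k⟩⟨ψ_k|)` is a bipartite state, and `γ` is
separable if and only if `(1/2) Q` is separable. -/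
theorem separable_block_state_iff {dA dB : ℕ} (hA : 3 ≤ dA) (hB : 1 ≤ dB)
    (Q : Matrix (Fin dA × Fin dB) (Fin dA × Fin dB) ℂ) (hQ : Q.PosSemidef)
    (hsupp : ∀ p q : Fin dA × Fin dB, ¬((p.1 : ℕ) < 2 ∧ (q.1 : ℕ) < 2) → Q p q = 0)
    (htrB : trB Q =
      Matrix.single (⟨0, by omega⟩ : Fin dA) (⟨0, by omega⟩ : Fin dA) (1 : ℂ) +
        Matrix.single (⟨1, by omega⟩ : Fin dA) (⟨1, by omega⟩ : Fin dA) (1 : ℂ))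
    (ψ : Fin (dA - 2) → Fin dB → ℂ) (hψ : ∀ k, star (ψ k) ⬝ᵥ ψ k = 1)
    (γ : Matrix (Fin dA × Fin dB) (Fin dA × Fin dB) ℂ)
    (hγ : γ = ((dA : ℂ))⁻¹ •
      (Q + ∑ k : Fin (dA - 2),
        Matrix.single (⟨(k : ℕ) + 2, by have := k.isLt; omega⟩ : Fin dA)
            (⟨(k : ℕ) + 2, by have := k.isLt; omega⟩ : Fin dA) (1 : ℂ) ⊗ₖ ketBra (ψ k))) :
    γ.PosSemidef ∧ γ.trace = 1 ∧
      (MatrixSeparable γ ↔ MatrixSeparable ((1 / 2 : ℂ) • Q)) := by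
  have hdA0 : (dA : ℂ) ≠ 0 := by
    exact_mod_cast Nat.cast_ne_zero.mpr (by omega : dA ≠ 0)
  have hinv : ((dA : ℂ))⁻¹ = (((dA : ℝ)⁻¹ : ℝ) : ℂ) := by push_cast; ring
  refine ⟨?_, ?_, ?_, ?_⟩
  · -- PosSemidef
    rw [hγ, hinv]
    refine posSemidef_real_smul (posSemidef_add hQ (posSemidef_sum _ _ fun k _ => ?_))
      (by positivity)
    rw [std_eq_ketBra, ketBra_kron]
    exact vecMulVec_star_posSemidef _
  · -- trace
    have htrQ : Q.trace = 2 := by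
      have h1 : Q.trace = (trB Q).trace := by
        simp [Matrix.trace, Matrix.diag, trB, Fintype.sum_prod_type]
      rw [h1, htrB, trace_add]
      norm_num [Matrix.trace, Matrix.diag, Matrix.single]
    have htk : ∀ k, (ketBra (ψ k)).trace = 1 := fun k => by
      rw [← hψ k]
      simp [Matrix.trace, Matrix.diag, ketBra, vecMulVec_apply, dotProduct, mul_comm]
    have hstdtr : ∀ k : Fin (dA - 2),
        (Matrix.single (⟨(k : ℕ) + 2, by have := k.isLt; omega⟩ : Fin dA)
          (⟨(k : ℕ) + 2, by have := k.isLt; omega⟩ : Fin dA) (1 : ℂ)).trace = 1 := fun k => by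
      norm_num [Matrix.trace, Matrix.diag, Matrix.single]
    have hcast : ((dA - 2 : ℕ) : ℂ) = (dA : ℂ) - 2 := by
      push_cast [Nat.cast_sub (by omega : 2 ≤ dA)]
      ring
    rw [hγ, trace_smul, trace_add, trace_sum, htrQ]
    simp only [trace_kronecker, htk, hstdtr, one_mul, mul_one]
    rw [Finset.sum_const, Finset.card_univ, Fintype.card_fin, nsmul_eq_mul, mul_one, hcast]
    rw [smul_eq_mul]
    field_simp
    ring
  · -- forward: γ separable → (1/2) Q separable
    rintro ⟨n, lam, a, b, hlam, hge⟩
    refine ⟨n, fun i => ((dA : ℝ) / 2) * lam i,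
      fun i j => if (j : ℕ) < 2 then a i j else 0, b,
      fun i => mul_nonneg (by positivity) (hlam i), ?_⟩
    ext ⟨j, m⟩ ⟨k, nn⟩
    by_cases hjk : (j : ℕ) < 2 ∧ (k : ℕ) < 2
    · have hγe : γ (j, m) (k, nn) = (dA : ℂ)⁻¹ * Q (j, m) (k, nn) := by
        rw [hγ]
        simp only [Matrix.smul_apply, Matrix.add_apply, smul_eq_mul, Matrix.sum_apply]
        have hz : ∀ k' : Fin (dA - 2),
            (Matrix.single (⟨(k' : ℕ) + 2, by have := k'.isLt; omega⟩ : Fin dA)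
              (⟨(k' : ℕ) + 2, by have := k'.isLt; omega⟩ : Fin dA) (1 : ℂ)
                ⊗ₖ ketBra (ψ k')) (j, m) (k, nn) = 0 := by
          intro k'
          simp only [kroneckerMap_apply, Matrix.single, of_apply]
          rw [if_neg, zero_mul]
          rintro ⟨h1, -⟩
          have : (k' : ℕ) + 2 = (j : ℕ) := congrArg Fin.val h1
          omega
        rw [Finset.sum_eq_zero fun k' _ => hz k', add_zero]
      have hsum : ∑ i, ((((dA : ℝ) / 2) * lam i : ℝ) : ℂ) •
            ((ketBra (fun j' => if (j' : ℕ) < 2 then a i j' else 0) ⊗ₖ ketBra (b i)) (j, m) (k, nn))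
          = ((dA : ℂ) / 2) * γ (j, m) (k, nn) := by
        rw [hge, Matrix.sum_apply, Finset.mul_sum]
        refine Finset.sum_congr rfl fun i _ => ?_
        simp only [Matrix.smul_apply, smul_eq_mul, kroneckerMap_apply, ketBra_apply,
          Pi.star_apply]
        rw [if_pos hjk.1, if_pos hjk.2]
        push_cast
        ring
      have hgoal : (∑ i, ((((dA : ℝ) / 2) * lam i : ℝ) : ℂ) •
            (ketBra (fun j' => if (j' : ℕ) < 2 then a i j' else 0) ⊗ₖ ketBra (b i))) (j, m) (k, nn)
          = ((dA : ℂ) / 2) * γ (j, m) (k, nn) := by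
        rw [Matrix.sum_apply]
        exact hsum
      rw [hgoal, hγe, Matrix.smul_apply, smul_eq_mul]
      field_simp
    · rw [Matrix.smul_apply, hsupp (j, m) (k, nn) hjk, smul_zero, Matrix.sum_apply]
      symm
      refine Finset.sum_eq_zero fun i _ => ?_
      simp only [Matrix.smul_apply, smul_eq_mul, kroneckerMap_apply, ketBra_apply, Pi.star_apply]
      rcases not_and_or.mp hjk with h | h
      · rw [if_neg h]
        simp
      · rw [if_neg h]
        simp
  · -- reverse: (1/2) Q separable → γ separable
    intro hsep
    rw [hγ, hinv]
    have h2Q : MatrixSeparable Q := by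
      have h := MatrixSeparable.smul' (2 : ℝ) (by norm_num) hsep
      have h2 : ((2 : ℝ) : ℂ) • ((1 / 2 : ℂ) • Q) = Q := by
        rw [smul_smul]
        norm_num
      rwa [h2] at h
    refine MatrixSeparable.smul' _ (by positivity)
      (MatrixSeparable.add' h2Q (MatrixSeparable.sum' _ _ fun k _ => ?_))
    rw [std_eq_ketBra]
    exact MatrixSeparable.kron _ _
end
end

section
/- Let ρ₁, ρ₂ ∈ M_{d_A}(ℂ) be positive definite matrices of trace 1, and set T = ρ₂^{1/2} ρ₁^{−1/2} (positive semidefinite square roots). Then the map γ ↦ (T ⊗ I_{d_B}) γ (T* ⊗ I_{d_B}) is a bijection from the set of bipartite states γ on ℂ^{d_A} ⊗ ℂ^{d_B} with γ_A = ρ₁ onto the set of bipartite states with γ_A = ρ₂; moreover it preserves rank (rank of the image equals rank γ) and preserves separability in both directions (γ is separable if and only if its image is separable). -/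
open Matrix Kronecker
open scoped ComplexOrder

noncomputable section

/-- The square root of a positive semidefinite matrix, as `Matrix.PosSemidef.sqrt` was defined
in Mathlib (December 2024); the definition has since been removed from Mathlib. -/
def Matrix.PosSemidef.sqrt {n : Type*} [Fintype n] [DecidableEq n] {A : Matrix n n ℂ}
    (hA : A.PosSemidef) : Matrix n n ℂ :=
  (hA.1.eigenvectorUnitary : Matrix n n ℂ) *
    diagonal (fun i => ((Real.sqrt (hA.1.eigenvalues i) : ℝ) : ℂ)) *
    (star hA.1.eigenvectorUnitary : Matrix n n ℂ)

lemma psd_sqrt_conjT {n : Type*} [Fintype n] [DecidableEq n] {A : Matrix n n ℂ}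
    (hA : A.PosSemidef) : hA.sqrtᴴ = hA.sqrt := by
  show star hA.sqrt = hA.sqrt
  simp only [Matrix.PosSemidef.sqrt, star_mul, star_star, Matrix.mul_assoc]
  rw [star_eq_conjTranspose (diagonal _), diagonal_conjTranspose]
  congr 2
  rw [diagonal_eq_diagonal_iff]
  intro i
  simp

lemma psd_sqrt_mul_self {n : Type*} [Fintype n] [DecidableEq n] {A : Matrix n n ℂ}
    (hA : A.PosSemidef) : hA.sqrt * hA.sqrt = A := by
  have hU : (star hA.1.eigenvectorUnitary : Matrix n n ℂ) * hA.1.eigenvectorUnitary = 1 :=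
    Unitary.coe_star_mul_self _
  have hD : diagonal (fun i => ((Real.sqrt (hA.1.eigenvalues i) : ℝ) : ℂ)) *
      diagonal (fun i => ((Real.sqrt (hA.1.eigenvalues i) : ℝ) : ℂ)) =
      diagonal (RCLike.ofReal ∘ hA.1.eigenvalues) := by
    rw [diagonal_mul_diagonal]
    congr 1; ext i
    simp only [Function.comp_apply]
    rw [← Complex.ofReal_mul, Real.mul_self_sqrt (hA.eigenvalues_nonneg i)]
    rfl
  conv_rhs => rw [hA.1.spectral_theorem, Unitary.conjStarAlgAut_apply]
  simp only [Matrix.PosSemidef.sqrt, Matrix.mul_assoc]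
  rw [← Matrix.mul_assoc (star _ : Matrix n n ℂ) (hA.1.eigenvectorUnitary : Matrix n n ℂ), hU,
    Matrix.one_mul, ← Matrix.mul_assoc (diagonal _), hD]

variable {dA dB : ℕ}

lemma trB_conj (A B : Matrix (Fin dA) (Fin dA) ℂ)
    (γ : Matrix (Fin dA × Fin dB) (Fin dA × Fin dB) ℂ) :
    trB ((A ⊗ₖ (1 : Matrix (Fin dB) (Fin dB) ℂ)) * γ * (B ⊗ₖ 1)) = A * trB γ * B := by
  ext j k
  simp only [trB, Matrix.mul_apply, of_apply, kroneckerMap_apply, one_apply,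
    Fintype.sum_prod_type]
  simp only [mul_ite, mul_one, mul_zero, ite_mul, zero_mul, Finset.sum_ite_eq',
    Finset.mem_univ, if_true, Finset.sum_ite_eq, Finset.mul_sum, Finset.sum_mul]
  rw [Finset.sum_comm]
  exact Finset.sum_congr rfl fun _ _ => Finset.sum_comm

lemma trace_eq_trace_trB (γ : Matrix (Fin dA × Fin dB) (Fin dA × Fin dB) ℂ) :
    γ.trace = (trB γ).trace := by
  simp [Matrix.trace, trB, Matrix.diag, Fintype.sum_prod_type]

lemma conj_ketBra (M : Matrix (Fin dA) (Fin dA) ℂ) (v : Fin dA → ℂ) :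
    M * ketBra v * Mᴴ = ketBra (M *ᵥ v) := by
  ext j k
  simp only [ketBra, Matrix.mul_apply, vecMulVec_apply, conjTranspose_apply, mulVec,
    dotProduct, Pi.star_apply, Finset.sum_mul, Finset.mul_sum, star_sum, star_mul']
  refine Finset.sum_congr rfl fun p _ => Finset.sum_congr rfl fun r _ => ?_
  ring

lemma sep_conj (S : Matrix (Fin dA) (Fin dA) ℂ)
    {γ : Matrix (Fin dA × Fin dB) (Fin dA × Fin dB) ℂ} (h : MatrixSeparable γ) :
    MatrixSeparable ((S ⊗ₖ (1 : Matrix (Fin dB) (Fin dB) ℂ)) * γ * (Sᴴ ⊗ₖ 1)) := by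
  obtain ⟨n, lam, a, b, hlam, rfl⟩ := h
  refine ⟨n, lam, fun i => S *ᵥ a i, b, hlam, ?_⟩
  rw [Finset.mul_sum, Finset.sum_mul]
  refine Finset.sum_congr rfl fun i _ => ?_
  rw [Matrix.mul_smul, Matrix.smul_mul, ← mul_kronecker_mul, ← mul_kronecker_mul,
    ← conj_ketBra, one_mul, mul_one]

lemma kron_one_conjT (S : Matrix (Fin dA) (Fin dA) ℂ) :
    (S ⊗ₖ (1 : Matrix (Fin dB) (Fin dB) ℂ))ᴴ = Sᴴ ⊗ₖ 1 := by
  ext ⟨j, m⟩ ⟨k, n⟩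
  simp only [conjTranspose_apply, kroneckerMap_apply, one_apply, star_mul',
    apply_ite (star : ℂ → ℂ), star_one, star_zero, eq_comm, mul_comm]

lemma kron_one_mul (A B : Matrix (Fin dA) (Fin dA) ℂ) :
    (A ⊗ₖ (1 : Matrix (Fin dB) (Fin dB) ℂ)) * (B ⊗ₖ 1) = (A * B) ⊗ₖ 1 := by
  rw [← mul_kronecker_mul, one_mul]

lemma cancel_conj (S : Matrix (Fin dA) (Fin dA) ℂ) (hS : IsUnit S.det)
    (γ : Matrix (Fin dA × Fin dB) (Fin dA × Fin dB) ℂ) :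
    (S⁻¹ ⊗ₖ (1 : Matrix (Fin dB) (Fin dB) ℂ)) *
      ((S ⊗ₖ 1) * γ * (Sᴴ ⊗ₖ 1)) * ((S⁻¹)ᴴ ⊗ₖ 1) = γ := by
  have e1 : (S⁻¹ ⊗ₖ (1 : Matrix (Fin dB) (Fin dB) ℂ)) * (S ⊗ₖ 1) = 1 := by
    rw [kron_one_mul, nonsing_inv_mul _ hS, one_kronecker_one]
  have e2 : (Sᴴ ⊗ₖ (1 : Matrix (Fin dB) (Fin dB) ℂ)) * ((S⁻¹)ᴴ ⊗ₖ 1) = 1 := by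
    rw [kron_one_mul, conjTranspose_nonsing_inv, mul_nonsing_inv _
      (Matrix.det_conjTranspose S ▸ hS.star), one_kronecker_one]
  calc (S⁻¹ ⊗ₖ (1 : Matrix (Fin dB) (Fin dB) ℂ)) * ((S ⊗ₖ 1) * γ * (Sᴴ ⊗ₖ 1)) *
        ((S⁻¹)ᴴ ⊗ₖ 1)
      = ((S⁻¹ ⊗ₖ 1) * (S ⊗ₖ 1)) * γ * ((Sᴴ ⊗ₖ 1) * ((S⁻¹)ᴴ ⊗ₖ 1)) := by
        simp only [Matrix.mul_assoc]
    _ = γ := by rw [e1, e2, Matrix.one_mul, Matrix.mul_one]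

lemma conj_mem (S ρ ρ' : Matrix (Fin dA) (Fin dA) ℂ) (hc : S * ρ * Sᴴ = ρ')
    (htr : ρ'.trace = 1) (γ : Matrix (Fin dA × Fin dB) (Fin dA × Fin dB) ℂ)
    (hγ : γ.PosSemidef) (hγB : trB γ = ρ) :
    ((S ⊗ₖ (1 : Matrix (Fin dB) (Fin dB) ℂ)) * γ * (Sᴴ ⊗ₖ 1)).PosSemidef ∧
    ((S ⊗ₖ (1 : Matrix (Fin dB) (Fin dB) ℂ)) * γ * (Sᴴ ⊗ₖ 1)).trace = 1 ∧
    trB ((S ⊗ₖ (1 : Matrix (Fin dB) (Fin dB) ℂ)) * γ * (Sᴴ ⊗ₖ 1)) = ρ' := by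
  have hB : trB ((S ⊗ₖ (1 : Matrix (Fin dB) (Fin dB) ℂ)) * γ * (Sᴴ ⊗ₖ 1)) = ρ' := by
    rw [trB_conj, hγB, hc]
  refine ⟨?_, ?_, hB⟩
  · rw [← kron_one_conjT]
    exact hγ.mul_mul_conjTranspose_same _
  · rw [trace_eq_trace_trB, hB, htr]

theorem state_bijection_marginal_change' {dA dB : ℕ}
    (ρ1 ρ2 : Matrix (Fin dA) (Fin dA) ℂ)
    (h1 : ρ1.PosDef) (h2 : ρ2.PosDef) (ht1 : ρ1.trace = 1) (ht2 : ρ2.trace = 1)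
    (T : Matrix (Fin dA) (Fin dA) ℂ)
    (hT : T = h2.posSemidef.sqrt * (h1.posSemidef.sqrt)⁻¹) :
    Set.BijOn
      (fun γ : Matrix (Fin dA × Fin dB) (Fin dA × Fin dB) ℂ =>
        (T ⊗ₖ (1 : Matrix (Fin dB) (Fin dB) ℂ)) * γ *
          (Tᴴ ⊗ₖ (1 : Matrix (Fin dB) (Fin dB) ℂ)))
      {γ | γ.PosSemidef ∧ γ.trace = 1 ∧ trB γ = ρ1}
      {γ | γ.PosSemidef ∧ γ.trace = 1 ∧ trB γ = ρ2} ∧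
    ∀ γ : Matrix (Fin dA × Fin dB) (Fin dA × Fin dB) ℂ,
      γ.PosSemidef → γ.trace = 1 → trB γ = ρ1 →
        ((T ⊗ₖ (1 : Matrix (Fin dB) (Fin dB) ℂ)) * γ *
            (Tᴴ ⊗ₖ (1 : Matrix (Fin dB) (Fin dB) ℂ))).rank = γ.rank ∧
        (MatrixSeparable γ ↔
          MatrixSeparable
            ((T ⊗ₖ (1 : Matrix (Fin dB) (Fin dB) ℂ)) * γ *
              (Tᴴ ⊗ₖ (1 : Matrix (Fin dB) (Fin dB) ℂ)))) := by
  set s1 := h1.posSemidef.sqrt with hs1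
  set s2 := h2.posSemidef.sqrt with hs2
  have hH1 : s1ᴴ = s1 := psd_sqrt_conjT h1.posSemidef
  have hH2 : s2ᴴ = s2 := psd_sqrt_conjT h2.posSemidef
  have hsq1 : s1 * s1 = ρ1 := psd_sqrt_mul_self h1.posSemidef
  have hsq2 : s2 * s2 = ρ2 := psd_sqrt_mul_self h2.posSemidef
  have hs1d : IsUnit s1.det := by
    have hu : IsUnit ρ1.det := isUnit_iff_ne_zero.mpr h1.det_pos.ne'
    rw [← hsq1, det_mul] at hu
    exact isUnit_of_mul_isUnit_left hu
  have hs2d : IsUnit s2.det := by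
    have hu : IsUnit ρ2.det := isUnit_iff_ne_zero.mpr h2.det_pos.ne'
    rw [← hsq2, det_mul] at hu
    exact isUnit_of_mul_isUnit_left hu
  have hTdet : IsUnit T.det := by
    rw [hT, det_mul]
    exact hs2d.mul (isUnit_nonsing_inv_det _ hs1d)
  have hTidet : IsUnit T⁻¹.det := isUnit_nonsing_inv_det _ hTdet
  have hTinv : T⁻¹ = s1 * s2⁻¹ := by
    rw [hT, Matrix.mul_inv_rev, nonsing_inv_nonsing_inv _ hs1d]
  have hTH : Tᴴ = s1⁻¹ * s2 := by
    rw [hT, conjTranspose_mul, conjTranspose_nonsing_inv, hH1, hH2]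
  have hTiH : (T⁻¹)ᴴ = s2⁻¹ * s1 := by
    rw [hTinv, conjTranspose_mul, conjTranspose_nonsing_inv, hH1, hH2]
  have key : T * ρ1 * Tᴴ = ρ2 := by
    rw [hTH, hT, ← hsq1, ← hsq2]
    simp only [Matrix.mul_assoc]
    rw [nonsing_inv_mul_cancel_left _ _ hs1d, mul_nonsing_inv_cancel_left _ _ hs1d]
  have key2 : T⁻¹ * ρ2 * (T⁻¹)ᴴ = ρ1 := by
    rw [hTiH, hTinv, ← hsq1, ← hsq2]
    simp only [Matrix.mul_assoc]
    rw [nonsing_inv_mul_cancel_left _ _ hs2d, mul_nonsing_inv_cancel_left _ _ hs2d]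
  have hMdet : IsUnit (T ⊗ₖ (1 : Matrix (Fin dB) (Fin dB) ℂ)).det := by
    rw [det_kronecker, det_one, one_pow, mul_one]
    exact hTdet.pow _
  have hNdet : IsUnit (Tᴴ ⊗ₖ (1 : Matrix (Fin dB) (Fin dB) ℂ)).det := by
    rw [det_kronecker, det_one, one_pow, mul_one, det_conjTranspose]
    exact hTdet.star.pow _
  refine ⟨⟨fun γ hγ => conj_mem T ρ1 ρ2 key ht2 γ hγ.1 hγ.2.2, ?_, ?_⟩, fun γ hpsd htr hB => ⟨?_, ?_⟩⟩
  · intro γ hγ γ' hγ' h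
    have h' := congrArg
      (fun X => (T⁻¹ ⊗ₖ (1 : Matrix (Fin dB) (Fin dB) ℂ)) * X * ((T⁻¹)ᴴ ⊗ₖ 1)) h
    dsimp only at h'
    rwa [cancel_conj T hTdet, cancel_conj T hTdet] at h'
  · intro γ' hγ'
    refine ⟨(T⁻¹ ⊗ₖ (1 : Matrix (Fin dB) (Fin dB) ℂ)) * γ' * ((T⁻¹)ᴴ ⊗ₖ 1),
      conj_mem T⁻¹ ρ2 ρ1 key2 ht1 γ' hγ'.1 hγ'.2.2, ?_⟩
    have := cancel_conj T⁻¹ hTidet γ'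
    rwa [nonsing_inv_nonsing_inv _ hTdet] at this
  · rw [Matrix.rank_mul_eq_left_of_isUnit_det _ _ hNdet,
      Matrix.rank_mul_eq_right_of_isUnit_det _ _ hMdet]
  · constructor
    · exact sep_conj T
    · intro h
      have := sep_conj T⁻¹ h
      rwa [cancel_conj T hTdet] at this


end

noncomputable section
open Matrix Kronecker
open scoped ComplexOrder

/-- For positive definite trace-one `ρ₁, ρ₂ ∈ M_{d_A}(ℂ)` and
`T = ρ₂^{1/2} ρ₁^{-1/2}`, the map `γ ↦ (T ⊗ I) γ (T* ⊗ I)` is a bijection from the bipartite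
states with `γ_A = ρ₁` onto those with `γ_A = ρ₂`; moreover it preserves rank and preserves
separability in both directions. -/
theorem state_bijection_marginal_change {dA dB : ℕ}
    (ρ1 ρ2 : Matrix (Fin dA) (Fin dA) ℂ)
    (h1 : ρ1.PosDef) (h2 : ρ2.PosDef) (ht1 : ρ1.trace = 1) (ht2 : ρ2.trace = 1)
    (T : Matrix (Fin dA) (Fin dA) ℂ)
    (hT : T = h2.posSemidef.sqrt * (h1.posSemidef.sqrt)⁻¹) :
    Set.BijOn
      (fun γ : Matrix (Fin dA × Fin dB) (Fin dA × Fin dB) ℂ =>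
        (T ⊗ₖ (1 : Matrix (Fin dB) (Fin dB) ℂ)) * γ *
          (Tᴴ ⊗ₖ (1 : Matrix (Fin dB) (Fin dB) ℂ)))
      {γ | γ.PosSemidef ∧ γ.trace = 1 ∧ trB γ = ρ1}
      {γ | γ.PosSemidef ∧ γ.trace = 1 ∧ trB γ = ρ2} ∧
    ∀ γ : Matrix (Fin dA × Fin dB) (Fin dA × Fin dB) ℂ,
      γ.PosSemidef → γ.trace = 1 → trB γ = ρ1 →
        ((T ⊗ₖ (1 : Matrix (Fin dB) (Fin dB) ℂ)) * γ *
            (Tᴴ ⊗ₖ (1 : Matrix (Fin dB) (Fin dB) ℂ))).rank = γ.rank ∧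
        (MatrixSeparable γ ↔
          MatrixSeparable
            ((T ⊗ₖ (1 : Matrix (Fin dB) (Fin dB) ℂ)) * γ *
              (Tᴴ ⊗ₖ (1 : Matrix (Fin dB) (Fin dB) ℂ)))) := by
  exact state_bijection_marginal_change' ρ1 ρ2 h1 h2 ht1 ht2 T hT
end
end
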